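/- Let (Z, 𝒜) be a measurable space, μ a probability measure on Z, n ≥ 1, and α ∈ ℝ with 1/(n+1) ≤ α < 1. Let L : ℝ × Z → ℝ be jointly measurable with 0 ≤ L(λ, z) ≤ 1 for all (λ, z), such that for every z the map λ ↦ L(λ, z) is non-increasing and right-continuous, and such that there exist λ_min, λ_max ∈ ℝ with L(λ_max, z) = 0 and L(λ_min, z) = 1 for every z. For (z₁, …, z_n) ∈ Z^n define λ̂(z₁, …, z_n) = sInf{λ ∈ ℝ : (1/n)·Σ_{i=1}^{n} L(λ, z_i) ≤ α + (α − 1)/n}. Then, under the product measure μ^{⊗(n+1)} on Z^{n+1}, the expectation ∫ L(λ̂(z₁, …, z_n), z_{n+1}) d μ^{⊗(n+1)}(z) is at most α. -/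

import Mathlib

open MeasureTheory in
/-- Conformal risk control for general bounded monotone losses: for a loss
`L(λ, z) ∈ [0,1]`, non-increasing and right-continuous in `λ`, attaining `0`
at some `λ_max` and `1` at some `λ_min`, and the calibrated threshold
`λ̂ = inf {λ : (1/n) Σ_i L(λ, z_i) ≤ α + (α−1)/n}`, the expected loss of `λ̂`
on a fresh i.i.d. sample is at most `α`. -/
theorem crc_general_monotone_loss {Z : Type*} [MeasurableSpace Z]
    (μ : Measure Z) [IsProbabilityMeasure μ] (n : ℕ) (hn : 1 ≤ n)
    (α : ℝ) (hα1 : 1 / ((n : ℝ) + 1) ≤ α) (hα2 : α < 1)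
    (L : ℝ → Z → ℝ) (hLmeas : Measurable fun q : ℝ × Z => L q.1 q.2)
    (hL0 : ∀ lam z, 0 ≤ L lam z) (hL1 : ∀ lam z, L lam z ≤ 1)
    (hmono : ∀ z, Antitone fun lam => L lam z)
    (hrc : ∀ z lam, ContinuousWithinAt (fun l => L l z) (Set.Ici lam) lam)
    (lamMin lamMax : ℝ)
    (hmax : ∀ z, L lamMax z = 0) (hmin : ∀ z, L lamMin z = 1) :
    ∫ z : Fin (n + 1) → Z,
        L (sInf {lam : ℝ |
            (1 / (n : ℝ)) * ∑ i : Fin n, L lam (z i.castSucc) ≤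
              α + (α - 1) / (n : ℝ)})
          (z (Fin.last n))
      ∂(Measure.pi fun _ : Fin (n + 1) => μ) ≤ α := by
  classical
  have hnpos : (0:ℝ) < n := by positivity
  have hn1pos : (0:ℝ) < (n:ℝ) + 1 := by positivity
  set ν : Measure (Fin (n+1) → Z) := Measure.pi fun _ : Fin (n+1) => μ with hν
  haveI : IsProbabilityMeasure ν := by
    rw [hν]; infer_instance
  set c : ℝ := ((n:ℝ) + 1) * α with hc
  have hc1 : 1 ≤ c := by
    rw [hc]
    rw [div_le_iff₀ hn1pos] at hα1
    linarith
  -- the full-sample feasible set and the oracle threshold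
  set S : (Fin (n+1) → Z) → Set ℝ := fun z =>
    {lam | ∑ i : Fin (n+1), L lam (z i) ≤ c} with hS
  set f : (Fin (n+1) → Z) → ℝ := fun z => sInf (S z) with hf
  have hSne : ∀ z, lamMax ∈ S z := by
    intro z
    simp only [hS, Set.mem_setOf_eq, hmax, Finset.sum_const_zero]
    linarith
  have hSlb : ∀ z, lamMin ∈ lowerBounds (S z) := by
    intro z lam hlam
    by_contra h
    push_neg at h
    have h1 : ∀ i : Fin (n+1), L lam (z i) = 1 := by
      intro i
      have := hmono (z i) h.le
      simp only at this
      have := (hmin (z i)) ▸ this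
      linarith [hL1 lam (z i)]
    have : ∑ i : Fin (n+1), L lam (z i) = (n:ℝ) + 1 := by
      rw [Finset.sum_congr rfl fun i _ => h1 i, Finset.sum_const, Finset.card_univ,
        Fintype.card_fin, nsmul_eq_mul, mul_one]
      push_cast
      ring
    have hlam' := hlam
    simp only [hS, Set.mem_setOf_eq, this] at hlam'
    rw [hc] at hlam'
    nlinarith
  have hSbdd : ∀ z, BddBelow (S z) := fun z => ⟨lamMin, hSlb z⟩
  -- the feasible set is upward closed
  have hSup : ∀ z lam lam', lam ∈ S z → lam ≤ lam' → lam' ∈ S z := by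
    intro z lam lam' hlam hle
    simp only [hS, Set.mem_setOf_eq] at hlam ⊢
    refine le_trans ?_ hlam
    exact Finset.sum_le_sum fun i _ => hmono (z i) hle
  -- the infimum is attained (right-continuity)
  have hfS : ∀ z, f z ∈ S z := by
    intro z
    by_contra h
    simp only [hS, Set.mem_setOf_eq, not_le] at h
    have hcwa : Filter.Tendsto (fun lam => ∑ i : Fin (n+1), L lam (z i))
        (nhdsWithin (f z) (Set.Ici (f z))) (nhds (∑ i : Fin (n+1), L (f z) (z i))) :=
      tendsto_finset_sum Finset.univ fun i _ => hrc (z i) (f z)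
    have hev : ∀ᶠ lam in nhdsWithin (f z) (Set.Ici (f z)),
        c < ∑ i : Fin (n+1), L lam (z i) :=
      hcwa.eventually_const_lt h
    rw [Filter.eventually_iff, mem_nhdsGE_iff_exists_Ico_subset] at hev
    obtain ⟨u, hu, hsub⟩ := hev
    obtain ⟨lam, hlamS, hlamu⟩ := exists_lt_of_csInf_lt ⟨lamMax, hSne z⟩ hu
    have hge : f z ≤ lam := csInf_le (hSbdd z) hlamS
    have := hsub ⟨hge, hlamu⟩
    simp only [hS, Set.mem_setOf_eq] at hlamS this
    linarith
  -- characterization: f z ≤ t ↔ t ∈ S z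
  have hfiff : ∀ z t, f z ≤ t ↔ t ∈ S z := by
    intro z t
    constructor
    · intro h; exact hSup z (f z) t (hfS z) h
    · intro h; exact csInf_le (hSbdd z) h
  -- measurability of f
  have hfmeas : Measurable f := by
    apply measurable_of_Iic
    intro t
    have : f ⁻¹' Set.Iic t = {z | ∑ i : Fin (n+1), L t (z i) ≤ c} := by
      ext z
      simp only [Set.mem_preimage, Set.mem_Iic, Set.mem_setOf_eq]
      exact hfiff z t
    rw [this]
    apply measurableSet_le _ measurable_const
    exact Finset.measurable_sum _ fun i _ =>
      hLmeas.comp (measurable_const.prodMk (measurable_pi_apply i))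
  -- the per-coordinate losses at the oracle threshold
  set G : Fin (n+1) → (Fin (n+1) → Z) → ℝ := fun k z => L (f z) (z k) with hG
  have hGmeas : ∀ k, Measurable (G k) := fun k =>
    hLmeas.comp (hfmeas.prodMk (measurable_pi_apply k))
  have hGint : ∀ k, Integrable (G k) ν := by
    intro k
    refine ⟨(hGmeas k).aestronglyMeasurable, ?_⟩
    apply HasFiniteIntegral.of_bounded (C := 1)
    filter_upwards with z
    rw [Real.norm_eq_abs, abs_le]
    exact ⟨by linarith [hL0 (f z) (z k)], hL1 (f z) (z k)⟩
  -- exchangeability: each coordinate contributes the same expected loss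
  have hexch : ∀ k : Fin (n+1), ∫ z, G k z ∂ν = ∫ z, G (Fin.last n) z ∂ν := by
    intro k
    set e : Fin (n+1) ≃ Fin (n+1) := Equiv.swap k (Fin.last n) with he
    set T : (Fin (n+1) → Z) ≃ᵐ (Fin (n+1) → Z) :=
      MeasurableEquiv.piCongrLeft (fun _ => Z) e with hT
    have hTP : MeasurePreserving T ν ν :=
      MeasureTheory.measurePreserving_piCongrLeft (fun _ => μ) e
    have hTz : ∀ (z : Fin (n+1) → Z) (i : Fin (n+1)), T z i = z (e.symm i) := by
      intro z i
      have h := MeasurableEquiv.piCongrLeft_apply_apply (β := fun _ : Fin (n+1) => Z)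
        e z (e.symm i)
      rw [Equiv.apply_symm_apply] at h
      exact h
    have key : ∀ z, G (Fin.last n) (T z) = G k z := by
      intro z
      have hfT : f (T z) = f z := by
        have hsum : ∀ lam, ∑ i : Fin (n+1), L lam (T z i) = ∑ i : Fin (n+1), L lam (z i) := by
          intro lam
          rw [Finset.sum_congr rfl fun (i : Fin (n+1)) _ => by rw [hTz z i]]
          exact Fintype.sum_equiv e.symm _ _ fun i => rfl
        have hSeq : S (T z) = S z := by
          ext lam
          simp only [hS, Set.mem_setOf_eq, hsum lam]
        simp only [hf, hSeq]
      have hlastT : T z (Fin.last n) = z k := by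
        rw [hTz]
        congr 1
        simp [he, Equiv.symm_swap, Equiv.swap_apply_right]
      simp only [hG, hfT, hlastT]
    calc ∫ z, G k z ∂ν = ∫ z, G (Fin.last n) (T z) ∂ν := by
          exact integral_congr_ae (Filter.Eventually.of_forall fun z => (key z).symm)
      _ = ∫ z, G (Fin.last n) z ∂ν :=
          hTP.integral_comp' (G (Fin.last n))
  -- sum over coordinates is at most c pointwise
  have hsumle : ∀ z, ∑ k : Fin (n+1), G k z ≤ c := fun z => hfS z
  -- hence the expected loss at the oracle threshold is at most α
  have horacle : ∫ z, G (Fin.last n) z ∂ν ≤ α := by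
    have h1 : ∫ z, ∑ k : Fin (n+1), G k z ∂ν
        = ((n:ℝ) + 1) * ∫ z, G (Fin.last n) z ∂ν := by
      rw [integral_finset_sum _ fun k _ => hGint k,
        Finset.sum_congr rfl fun k _ => hexch k, Finset.sum_const, Finset.card_univ,
        Fintype.card_fin, nsmul_eq_mul]
      push_cast
      ring
    have h2 : ∫ z, ∑ k : Fin (n+1), G k z ∂ν ≤ c := by
      calc ∫ z, ∑ k : Fin (n+1), G k z ∂ν ≤ ∫ _, c ∂ν := by
            apply integral_mono (integrable_finset_sum _ fun k _ => hGint k)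
              (integrable_const c) hsumle
        _ = c := by simp
    rw [h1, hc] at h2
    exact le_of_mul_le_mul_left h2 hn1pos
  -- the empirical threshold dominates the oracle threshold
  refine le_trans (integral_mono_of_nonneg ?_ (hGint (Fin.last n)) ?_) horacle
  · filter_upwards with z
    exact hL0 _ _
  · filter_upwards with z
    set Tset : Set ℝ := {lam : ℝ |
        (1 / (n : ℝ)) * ∑ i : Fin n, L lam (z i.castSucc) ≤ α + (α - 1) / (n : ℝ)} with hTset
    have hTsub : Tset ⊆ S z := by
      intro lam hlam
      simp only [hTset, Set.mem_setOf_eq] at hlam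
      have hd : (n:ℝ) * ((α - 1) / (n:ℝ)) = α - 1 := by
        rw [mul_comm]
        exact div_mul_cancel₀ _ hnpos.ne'
      have hsum : ∑ i : Fin n, L lam (z i.castSucc) ≤ (n:ℝ) * α + α - 1 := by
        calc ∑ i : Fin n, L lam (z i.castSucc)
            = (n:ℝ) * ((1 / (n:ℝ)) * ∑ i : Fin n, L lam (z i.castSucc)) := by
              rw [← mul_assoc, mul_one_div, div_self hnpos.ne', one_mul]
          _ ≤ (n:ℝ) * (α + (α - 1) / (n:ℝ)) :=
              mul_le_mul_of_nonneg_left hlam hnpos.le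
          _ = (n:ℝ) * α + α - 1 := by rw [mul_add, hd]; ring
      simp only [hS, Set.mem_setOf_eq]
      rw [Fin.sum_univ_castSucc]
      have := hL1 lam (z (Fin.last n))
      rw [hc]
      push_cast
      linarith
    have hTne : Tset.Nonempty := by
      refine ⟨lamMax, ?_⟩
      simp only [hTset, Set.mem_setOf_eq, hmax, Finset.sum_const_zero, mul_zero]
      have hnum : 0 ≤ (n:ℝ) * α + α - 1 := by
        rw [hc] at hc1
        nlinarith
      have heq : α + (α - 1) / (n:ℝ) = ((n:ℝ) * α + α - 1) / (n:ℝ) := by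
        field_simp
        ring
      rw [heq]
      exact div_nonneg hnum hnpos.le
    have hle : f z ≤ sInf Tset := csInf_le_csInf (hSbdd z) hTne hTsub
    exact hmono (z (Fin.last n)) hle
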